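/- arXiv:2509.16424 — 2 statements merged into one kernel-verified Lean document; each statement's English description precedes it below -/
import Mathlib

section
/- If q ≥ n and C ⊆ F_q^n is a Reed-Solomon code (of any dimension k ≤ n), then α_i(C) = n - i + 1 for all 1 ≤ i ≤ n. In particular, α_i(F_q^n) = n - i + 1 for 1 ≤ i ≤ n when q ≥ n. -/
open Module

/-- Hamming weight of a vector. -/
noncomputable def hwt {ι α : Type*} [Zero α] (x : ι → α) : ℕ := {i | x i ≠ 0}.ncard

/-- Minimum distance (minimum weight of a nonzero element) of a code `D`. -/
noncomputable def dminN {𝔽 V : Type*} [Field 𝔽] [AddCommGroup V] [Module 𝔽 V]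
    (wt : V → ℕ) (D : Submodule 𝔽 V) : ℕ :=
  sInf (wt '' {v : V | v ∈ D ∧ v ≠ 0})

/-- The `i`-th code distance of a code `C`: for `i ≤ dim C` the largest minimum distance of
an `i`-dimensional subcode of `C`, and for `i ≥ dim C` the largest minimum distance of an
`i`-dimensional supercode of `C` (both notions agree at `i = dim C`). -/
noncomputable def alphaN {𝔽 V : Type*} [Field 𝔽] [AddCommGroup V] [Module 𝔽 V]
    (wt : V → ℕ) (C : Submodule 𝔽 V) (i : ℕ) : ℕ :=
  if i ≤ finrank 𝔽 C then
    sSup (dminN wt '' {D : Submodule 𝔽 V | D ≤ C ∧ finrank 𝔽 D = i})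
  else
    sSup (dminN wt '' {D : Submodule 𝔽 V | C ≤ D ∧ finrank 𝔽 D = i})

/-- The Reed–Solomon code of dimension `k` with (distinct) evaluation points `a`:
the image of the space of polynomials of degree `< k` under evaluation. -/
noncomputable def RSCode {𝔽 : Type*} [Field 𝔽] {n : ℕ} (a : Fin n → 𝔽) (k : ℕ) :
    Submodule 𝔽 (Fin n → 𝔽) :=
  Submodule.map (LinearMap.pi fun i => Polynomial.leval (a i)) (Polynomial.degreeLT 𝔽 k)

section Aux

open Polynomial

variable {𝔽 : Type*} [Field 𝔽] {n : ℕ}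

lemma hwt_eq (v : Fin n → 𝔽) : hwt v = n - {j | v j = 0}.ncard := by
  have h := Set.ncard_add_ncard_compl {j : Fin n | v j = 0}
  have : {j : Fin n | v j = 0}ᶜ = {j | v j ≠ 0} := by ext j; simp
  rw [this] at h
  simp only [Nat.card_eq_fintype_card, Fintype.card_fin] at h
  unfold hwt
  omega

lemma zeroset_ncard_le (a : Fin n → 𝔽) (ha : Function.Injective a)
    {p : 𝔽[X]} (hp : p ≠ 0) : {j | p.eval (a j) = 0}.ncard ≤ p.natDegree := by
  classical
  have hfin : {j | p.eval (a j) = 0}.Finite := Set.toFinite _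
  rw [Set.ncard_eq_toFinset_card _ hfin]
  calc hfin.toFinset.card ≤ p.roots.toFinset.card := by
        apply Finset.card_le_card_of_injOn a
        · intro j hj
          simp only [Finset.mem_coe, Set.Finite.mem_toFinset, Set.mem_setOf_eq] at hj
          simp [Multiset.mem_toFinset, mem_roots, hp, hj]
        · exact fun x _ y _ h => ha h
    _ ≤ p.roots.card := Multiset.toFinset_card_le _
    _ ≤ p.natDegree := p.card_roots' 

lemma RSCode_mono (a : Fin n → 𝔽) {i k : ℕ} (h : i ≤ k) : RSCode a i ≤ RSCode a k :=
  Submodule.map_mono (Polynomial.degreeLT_mono h)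

lemma hwt_ge (a : Fin n → 𝔽) (ha : Function.Injective a) {i : ℕ} (hi : 1 ≤ i)
    {v : Fin n → 𝔽} (hv : v ∈ RSCode a i) (hv0 : v ≠ 0) : n - i + 1 ≤ hwt v := by
  obtain ⟨p, hp, hpv⟩ := hv
  have hset : {j | v j = 0} = {j | p.eval (a j) = 0} := by
    ext j; simp [← hpv, LinearMap.pi_apply, Polynomial.leval_apply]
  have hp0 : p ≠ 0 := by
    rintro rfl; apply hv0; rw [← hpv]; ext j; simp
  have hz : {j | p.eval (a j) = 0}.ncard ≤ i - 1 := by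
    refine le_trans (zeroset_ncard_le a ha hp0) ?_
    have hnd : p.natDegree < i := by
      rw [Polynomial.natDegree_lt_iff_degree_lt hp0]
      exact_mod_cast Polynomial.mem_degreeLT.mp hp
    omega
  have hlt : {j | v j = 0}.ncard < n := by
    obtain ⟨j, hj⟩ := Function.ne_iff.mp hv0
    have : {j | v j = 0} ⊂ Set.univ := by
      refine Set.ssubset_univ_iff.mpr ?_
      intro h
      exact hj (by have := h ▸ Set.mem_univ j; exact this)
    simpa [Set.ncard_univ] using Set.ncard_lt_ncard this (Set.toFinite _)
  rw [hwt_eq, hset]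
  rw [hset] at hlt
  omega

lemma exists_low_weight (a : Fin n → 𝔽) (ha : Function.Injective a) {i : ℕ}
    (hi : 1 ≤ i) (hin : i ≤ n) :
    ∃ v : Fin n → 𝔽, v ∈ RSCode a i ∧ v ≠ 0 ∧ hwt v = n - i + 1 := by
  have h1 : i - 1 ≤ n := by omega
  set f : Fin (i-1) → Fin n := Fin.castLE h1 with hf
  have hfinj : Function.Injective f := Fin.castLE_injective h1
  set p : 𝔽[X] := ∏ j : Fin (i-1), (X - C (a (f j))) with hpdef
  have hpmem : p ∈ Polynomial.degreeLT 𝔽 i := by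
    rw [Polynomial.mem_degreeLT, hpdef, Polynomial.degree_prod]
    simp only [Polynomial.degree_X_sub_C]
    rw [Finset.sum_const, Finset.card_univ, Fintype.card_fin, nsmul_eq_mul, mul_one]
    exact_mod_cast (by omega : i - 1 < i)
  set v : Fin n → 𝔽 := fun j => p.eval (a j) with hvdef
  have hvmem : v ∈ RSCode a i := ⟨p, hpmem, by ext j; simp [hvdef, Polynomial.leval_apply]⟩
  have hzset : {j | v j = 0} = Set.range f := by
    ext j
    simp only [Set.mem_setOf_eq, hvdef, hpdef, Polynomial.eval_prod, Polynomial.eval_sub,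
      Polynomial.eval_X, Polynomial.eval_C, Set.mem_range]
    rw [Finset.prod_eq_zero_iff]
    constructor
    · rintro ⟨j', -, hj'⟩
      exact ⟨j', (ha (sub_eq_zero.mp hj')).symm⟩
    · rintro ⟨j', rfl⟩
      exact ⟨j', Finset.mem_univ _, by ring⟩
  have hzcard : {j | v j = 0}.ncard = i - 1 := by
    rw [hzset, ← Set.image_univ, Set.ncard_image_of_injective _ hfinj, Set.ncard_univ]
    simp
  have hv0 : v ≠ 0 := by
    intro h
    have hmem : (⟨i-1, by omega⟩ : Fin n) ∈ Set.range f := by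
      rw [← hzset]; simp only [Set.mem_setOf_eq, h, Pi.zero_apply]
    obtain ⟨j', hj'⟩ := hmem
    have := congrArg Fin.val hj'
    simp [hf] at this
    omega
  exact ⟨v, hvmem, hv0, by rw [hwt_eq, hzcard]; omega⟩

lemma dminN_RSCode (a : Fin n → 𝔽) (ha : Function.Injective a) {i : ℕ}
    (hi : 1 ≤ i) (hin : i ≤ n) : dminN hwt (RSCode a i) = n - i + 1 := by
  obtain ⟨v, hvmem, hv0, hvwt⟩ := exists_low_weight a ha hi hin
  apply le_antisymm
  · exact Nat.sInf_le ⟨v, ⟨hvmem, hv0⟩, hvwt⟩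
  · exact le_csInf ⟨_, ⟨v, ⟨hvmem, hv0⟩, rfl⟩⟩
      (by rintro _ ⟨w, ⟨hw, hw0⟩, rfl⟩; exact hwt_ge a ha hi hw hw0)

lemma finrank_RSCode (a : Fin n → 𝔽) (ha : Function.Injective a) {i : ℕ} (hin : i ≤ n) :
    finrank 𝔽 (RSCode a i) = i := by
  classical
  set F : 𝔽[X] →ₗ[𝔽] (Fin n → 𝔽) := LinearMap.pi fun j => Polynomial.leval (a j) with hF
  set g : (Polynomial.degreeLT 𝔽 i) →ₗ[𝔽] (Fin n → 𝔽) := F.comp (Polynomial.degreeLT 𝔽 i).subtype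
  have hrange : LinearMap.range g = RSCode a i := by
    rw [LinearMap.range_comp, Submodule.range_subtype]; rfl
  have hginj : Function.Injective g := by
    rw [← LinearMap.ker_eq_bot]
    rw [Submodule.eq_bot_iff]
    rintro ⟨p, hp⟩ hker
    have hz : ∀ j, p.eval (a j) = 0 := by
      intro j
      have := congrFun (show g ⟨p, hp⟩ = 0 from hker) j
      simpa [g, hF, Polynomial.leval_apply] using this
    have hp0 : p = 0 := by
      by_contra hne
      have h1 : {j : Fin n | p.eval (a j) = 0}.ncard ≤ p.natDegree := zeroset_ncard_le a ha hne
      have h2 : {j : Fin n | p.eval (a j) = 0} = Set.univ := by ext j; simp [hz j]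
      rw [h2, Set.ncard_univ] at h1
      simp at h1
      have hnd : p.natDegree < i := by
        rw [Polynomial.natDegree_lt_iff_degree_lt hne]
        exact_mod_cast Polynomial.mem_degreeLT.mp hp
      omega
    simp [hp0]
  rw [← hrange, LinearMap.finrank_range_of_inj hginj]
  rw [(Polynomial.degreeLTEquiv 𝔽 i).finrank_eq]
  simp

lemma singleton_bound {D : Submodule 𝔽 (Fin n → 𝔽)} {i : ℕ} (hi : 1 ≤ i) (hin : i ≤ n)
    (hD : finrank 𝔽 D = i) : dminN hwt D ≤ n - i + 1 := by
  classical
  have h1 : i - 1 ≤ n := by omega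
  set g : D →ₗ[𝔽] (Fin (i-1) → 𝔽) :=
    (LinearMap.funLeft 𝔽 𝔽 (Fin.castLE h1)).comp D.subtype with hg
  have hnotinj : ¬ Function.Injective g := by
    intro hinj
    have := LinearMap.finrank_le_finrank_of_injective hinj
    rw [hD] at this
    simp [Module.finrank_pi] at this
    omega
  rw [injective_iff_map_eq_zero'] at hnotinj
  push_neg at hnotinj
  obtain ⟨⟨v, hv⟩, hne⟩ := hnotinj
  rcases hne with ⟨hgz, hvne⟩ | ⟨hgne, hvz⟩
  · have hv0 : v ≠ 0 := fun h => hvne (Subtype.ext h)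
    have hzsub : {j : Fin n | (j : ℕ) < i - 1} ⊆ {j | v j = 0} := by
      intro j hj
      have := congrFun hgz ⟨(j : ℕ), hj⟩
      simpa [hg, LinearMap.funLeft, Fin.castLE] using this
    have hcard : (i - 1 : ℕ) ≤ {j | v j = 0}.ncard := by
      have heq : {j : Fin n | (j : ℕ) < i - 1} = Set.range (Fin.castLE h1) := by
        ext j
        constructor
        · intro hj; exact ⟨⟨(j:ℕ), hj⟩, rfl⟩
        · rintro ⟨j', rfl⟩; exact j'.isLt
      have : {j : Fin n | (j : ℕ) < i - 1}.ncard = i - 1 := by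
        rw [heq, ← Set.image_univ,
          Set.ncard_image_of_injective _ (Fin.castLE_injective h1), Set.ncard_univ]
        simp
      rw [← this]
      exact Set.ncard_le_ncard hzsub (Set.toFinite _)
    have hwtle : hwt v ≤ n - i + 1 := by
      rw [hwt_eq]
      have : {j | v j = 0}.ncard ≤ n := by
        have := Set.ncard_le_ncard (Set.subset_univ {j | v j = 0}) (Set.toFinite _)
        simpa [Set.ncard_univ] using this
      omega
    exact le_trans (Nat.sInf_le ⟨v, ⟨hv, hv0⟩, rfl⟩) hwtle
  · exfalso; exact hgne (by simp [hvz, hg])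

lemma alpha_main (a : Fin n → 𝔽) (ha : Function.Injective a) {k i : ℕ} (hk : k ≤ n)
    (hi : 1 ≤ i) (hin : i ≤ n) : alphaN hwt (RSCode a k) i = n - i + 1 := by
  rw [alphaN, finrank_RSCode a ha hk]
  have hbdd : ∀ x ∈ dminN (𝔽 := 𝔽) (V := Fin n → 𝔽) hwt ''
      {D | finrank 𝔽 D = i}, x ≤ n - i + 1 := by
    rintro _ ⟨D, hD, rfl⟩
    exact singleton_bound hi hin hD
  have hb1 : BddAbove (dminN (𝔽 := 𝔽) hwt ''
      {D : Submodule 𝔽 (Fin n → 𝔽) | D ≤ RSCode a k ∧ finrank 𝔽 D = i}) :=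
    ⟨n - i + 1, by rintro _ ⟨D, ⟨-, hD⟩, rfl⟩; exact singleton_bound hi hin hD⟩
  have hb2 : BddAbove (dminN (𝔽 := 𝔽) hwt ''
      {D : Submodule 𝔽 (Fin n → 𝔽) | RSCode a k ≤ D ∧ finrank 𝔽 D = i}) :=
    ⟨n - i + 1, by rintro _ ⟨D, ⟨-, hD⟩, rfl⟩; exact singleton_bound hi hin hD⟩
  split_ifs with h
  · have hmem : dminN hwt (RSCode a i) ∈ dminN (𝔽 := 𝔽) hwt ''
        {D : Submodule 𝔽 (Fin n → 𝔽) | D ≤ RSCode a k ∧ finrank 𝔽 D = i} :=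
      ⟨RSCode a i, ⟨RSCode_mono a h, finrank_RSCode a ha hin⟩, rfl⟩
    apply le_antisymm
    · exact csSup_le ⟨_, hmem⟩ (by rintro _ ⟨D, ⟨-, hD⟩, rfl⟩; exact singleton_bound hi hin hD)
    · rw [← dminN_RSCode a ha hi hin]
      exact le_csSup hb1 hmem
  · push_neg at h
    have hmem : dminN hwt (RSCode a i) ∈ dminN (𝔽 := 𝔽) hwt ''
        {D : Submodule 𝔽 (Fin n → 𝔽) | RSCode a k ≤ D ∧ finrank 𝔽 D = i} :=
      ⟨RSCode a i, ⟨RSCode_mono a h.le, finrank_RSCode a ha hin⟩, rfl⟩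
    apply le_antisymm
    · exact csSup_le ⟨_, hmem⟩ (by rintro _ ⟨D, ⟨-, hD⟩, rfl⟩; exact singleton_bound hi hin hD)
    · rw [← dminN_RSCode a ha hi hin]
      exact le_csSup hb2 hmem

lemma RSCode_top (a : Fin n → 𝔽) (ha : Function.Injective a) :
    RSCode a n = (⊤ : Submodule 𝔽 (Fin n → 𝔽)) := by
  apply Submodule.eq_top_of_finrank_eq
  rw [finrank_RSCode a ha le_rfl]
  simp [Module.finrank_pi]

end Aux

/-- If `q ≥ n` and `C ⊆ 𝔽_q^n` is a Reed–Solomon code (of any dimension `k ≤ n`), then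
`α_i(C) = n - i + 1` for all `1 ≤ i ≤ n`; in particular `α_i(𝔽_q^n) = n - i + 1`. -/
theorem alpha_RSCode {𝔽 : Type*} [Field 𝔽] [Fintype 𝔽] {n k : ℕ}
    (hq : n ≤ Fintype.card 𝔽) (a : Fin n → 𝔽) (ha : Function.Injective a) (hk : k ≤ n) :
    (∀ i, 1 ≤ i → i ≤ n → alphaN hwt (RSCode a k) i = n - i + 1) ∧
    (∀ i, 1 ≤ i → i ≤ n → alphaN hwt (⊤ : Submodule 𝔽 (Fin n → 𝔽)) i = n - i + 1) := by
  refine ⟨fun i hi hin => alpha_main a ha hk hi hin, fun i hi hin => ?_⟩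
  rw [← RSCode_top a ha]
  exact alpha_main a ha le_rfl hi hin
end

section
/- Let C ⊆ F_q^n be a linear block code of dimension k with Hamming metric. There exists a generator matrix G of C with rows g_1,...,g_k such that for each 1 ≤ i ≤ k, the greedy subcode distance α_i^g(C) equals both the i-th partial distance of G and the Hamming weight of g_i, where the chain D_i = ⟨g_1,...,g_i⟩ is a chain of α_i-greedy subcodes. -/
open Module

/-- `IsGreedy wt C i D` says `D` is an `α_i`-greedy subcode of `C`: for `i = 1`, `D` is
generated by a codeword of `C` of maximum weight; for `i + 1`, `D` is an `(i+1)`-dimensional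
subcode of `C` of maximal minimum distance among the `(i+1)`-dimensional subcodes of `C`
containing some `α_i`-greedy subcode. -/
def IsGreedy {𝔽 V : Type*} [Field 𝔽] [AddCommGroup V] [Module 𝔽 V]
    (wt : V → ℕ) (C : Submodule 𝔽 V) : ℕ → Submodule 𝔽 V → Prop
  | 0, D => D = ⊥
  | 1, D => ∃ c : V, c ∈ C ∧ wt c = sSup (wt '' (C : Set V)) ∧ D = Submodule.span 𝔽 {c}
  | (i + 2), E => ∃ D : Submodule 𝔽 V, IsGreedy wt C (i + 1) D ∧ D ≤ E ∧ E ≤ C ∧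
      finrank 𝔽 E = i + 2 ∧
      ∀ E' D' : Submodule 𝔽 V, IsGreedy wt C (i + 1) D' → D' ≤ E' → E' ≤ C →
        finrank 𝔽 E' = i + 2 → dminN wt E' ≤ dminN wt E

/-- The `i`-th greedy subcode distance of `C`. -/
noncomputable def alphaG {𝔽 V : Type*} [Field 𝔽] [AddCommGroup V] [Module 𝔽 V]
    (wt : V → ℕ) (C : Submodule 𝔽 V) (i : ℕ) : ℕ :=
  sSup {d : ℕ | ∃ D : Submodule 𝔽 V, IsGreedy wt C i D ∧ dminN wt D = d}


set_option linter.unusedSectionVars false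
set_option linter.unnecessarySimpa false
set_option maxHeartbeats 1000000

section GreedyAux
variable {𝔽 : Type*} [Field 𝔽] [Fintype 𝔽] {n : ℕ}

lemma hwt_le (x : Fin n → 𝔽) : hwt x ≤ n := by
  have : {i | x i ≠ 0}.ncard ≤ (Set.univ : Set (Fin n)).ncard :=
    Set.ncard_le_ncard (Set.subset_univ _) Set.finite_univ
  simpa [hwt, Set.ncard_univ] using this

lemma hwt_eq_zero {x : Fin n → 𝔽} : hwt x = 0 ↔ x = 0 := by
  rw [hwt, Set.ncard_eq_zero (Set.toFinite _), Set.eq_empty_iff_forall_notMem, funext_iff]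
  simp

lemma hwt_smul {c : 𝔽} (hc : c ≠ 0) (x : Fin n → 𝔽) : hwt (c • x) = hwt x := by
  unfold hwt
  congr 1
  ext i
  simp [hc]

lemma dminN_exists {D : Submodule 𝔽 (Fin n → 𝔽)} (hD : D ≠ ⊥) :
    ∃ v, v ∈ D ∧ v ≠ 0 ∧ hwt v = dminN hwt D := by
  obtain ⟨v, hv, hv0⟩ := Submodule.exists_mem_ne_zero_of_ne_bot hD
  have hne : (hwt '' {v : Fin n → 𝔽 | v ∈ D ∧ v ≠ 0}).Nonempty := ⟨hwt v, ⟨v, ⟨hv, hv0⟩, rfl⟩⟩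
  obtain ⟨w, ⟨hw, hw0⟩, hweq⟩ := Nat.sInf_mem hne
  exact ⟨w, hw, hw0, hweq⟩

lemma dminN_le {D : Submodule 𝔽 (Fin n → 𝔽)} {v : Fin n → 𝔽} (hv : v ∈ D) (hv0 : v ≠ 0) :
    dminN hwt D ≤ hwt v :=
  Nat.sInf_le ⟨v, ⟨hv, hv0⟩, rfl⟩

lemma dminN_anti {D E : Submodule 𝔽 (Fin n → 𝔽)} (hD : D ≠ ⊥) (h : D ≤ E) :
    dminN hwt E ≤ dminN hwt D := by
  obtain ⟨v, hv, hv0, hveq⟩ := dminN_exists hD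
  calc dminN hwt E ≤ hwt v := dminN_le (h hv) hv0
  _ = _ := hveq

lemma dminN_pos {D : Submodule 𝔽 (Fin n → 𝔽)} (hD : D ≠ ⊥) : 1 ≤ dminN hwt D := by
  obtain ⟨v, hv, hv0, hveq⟩ := dminN_exists hD
  rw [← hveq]
  exact Nat.one_le_iff_ne_zero.mpr (fun h => hv0 (hwt_eq_zero.mp h))

lemma dminN_le_n (D : Submodule 𝔽 (Fin n → 𝔽)) : dminN hwt D ≤ n := by
  rcases eq_or_ne D ⊥ with rfl | hD
  · have h0 : {v : Fin n → 𝔽 | v ∈ (⊥ : Submodule 𝔽 (Fin n → 𝔽)) ∧ v ≠ 0} = ∅ := by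
      ext v; simp (config := { contextual := true }) [Submodule.mem_bot]
    rw [dminN, h0]
    simp
  · obtain ⟨v, hv, hv0, hveq⟩ := dminN_exists hD
    rw [← hveq]; exact hwt_le v

lemma dminN_span_singleton {c : Fin n → 𝔽} (hc : c ≠ 0) :
    dminN hwt (Submodule.span 𝔽 {c}) = hwt c := by
  have himg : hwt '' {v : Fin n → 𝔽 | v ∈ Submodule.span 𝔽 {c} ∧ v ≠ 0} = {hwt c} := by
    ext w
    constructor
    · rintro ⟨v, ⟨hv, hv0⟩, rfl⟩
      obtain ⟨a, rfl⟩ := Submodule.mem_span_singleton.mp hv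
      have ha : a ≠ 0 := by rintro rfl; simp at hv0
      simp [hwt_smul ha]
    · rintro rfl
      exact ⟨c, ⟨Submodule.mem_span_singleton_self c, hc⟩, rfl⟩
  rw [dminN, himg]
  simp

lemma bddAbove_hwt (s : Set (Fin n → 𝔽)) : BddAbove (hwt '' s) :=
  ⟨n, by rintro w ⟨u, -, rfl⟩; exact hwt_le u⟩

lemma hwt_le_sSup {C : Submodule 𝔽 (Fin n → 𝔽)} {v : Fin n → 𝔽} (hv : v ∈ C) :
    hwt v ≤ sSup (hwt '' (C : Set (Fin n → 𝔽))) := le_csSup (bddAbove_hwt _) ⟨v, hv, rfl⟩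

lemma one_le_sSup_hwt {C : Submodule 𝔽 (Fin n → 𝔽)} (hC : C ≠ ⊥) :
    1 ≤ sSup (hwt '' (C : Set (Fin n → 𝔽))) := by
  obtain ⟨v, hv, hv0⟩ := Submodule.exists_mem_ne_zero_of_ne_bot hC
  exact le_trans (Nat.one_le_iff_ne_zero.mpr (fun h => hv0 (hwt_eq_zero.mp h))) (hwt_le_sSup hv)

lemma exists_maxwt {C : Submodule 𝔽 (Fin n → 𝔽)} (hC : C ≠ ⊥) :
    ∃ c, c ∈ C ∧ c ≠ 0 ∧ hwt c = sSup (hwt '' (C : Set (Fin n → 𝔽))) := by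
  have hne : (hwt '' (C : Set (Fin n → 𝔽))).Nonempty := ⟨hwt 0, 0, C.zero_mem, rfl⟩
  obtain ⟨c, hc, hcw⟩ := Nat.sSup_mem hne (bddAbove_hwt _)
  refine ⟨c, hc, fun h => ?_, hcw⟩
  rw [h] at hcw
  have := one_le_sSup_hwt hC
  rw [← hcw] at this
  simp [hwt_eq_zero.mpr rfl] at this

lemma finrank_sup_span {D : Submodule 𝔽 (Fin n → 𝔽)} {v : Fin n → 𝔽} (hv : v ∉ D) :
    finrank 𝔽 ↥(D ⊔ Submodule.span 𝔽 {v}) = finrank 𝔽 D + 1 := by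
  have hv0 : v ≠ 0 := fun h => hv (h ▸ D.zero_mem)
  have hinf : D ⊓ Submodule.span 𝔽 {v} = ⊥ := by
    rw [eq_bot_iff]
    rintro x hx
    rw [Submodule.mem_inf] at hx
    obtain ⟨hxD, hxv⟩ := hx
    obtain ⟨a, rfl⟩ := Submodule.mem_span_singleton.mp hxv
    rcases eq_or_ne a 0 with rfl | ha
    · simp
    · exfalso
      have h2 : (a⁻¹ * a) • v ∈ D := by rw [mul_smul]; exact D.smul_mem _ hxD
      rw [inv_mul_cancel₀ ha, one_smul] at h2
      exact hv h2
  have h3 := Submodule.finrank_sup_add_finrank_inf_eq D (Submodule.span 𝔽 {v})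
  rw [hinf, finrank_span_singleton hv0] at h3
  simpa using h3

lemma ne_bot_of_finrank {D : Submodule 𝔽 (Fin n → 𝔽)} {m : ℕ} (h : finrank 𝔽 D = m)
    (hm : 1 ≤ m) : D ≠ ⊥ := by
  rintro rfl
  rw [finrank_bot] at h
  omega


variable {C : Submodule 𝔽 (Fin n → 𝔽)}

lemma greedy_basic (hC : C ≠ ⊥) :
    ∀ {s : ℕ}, 1 ≤ s → ∀ {D : Submodule 𝔽 (Fin n → 𝔽)}, IsGreedy hwt C s D →
      D ≤ C ∧ finrank 𝔽 D = s ∧ D ≠ ⊥ := by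
  intro s hs D hD
  match s, hs with
  | 1, _ =>
    obtain ⟨c, hcC, hcw, rfl⟩ := hD
    have hc0 : c ≠ 0 := by
      intro h
      rw [h] at hcw
      have h1 := one_le_sSup_hwt hC
      rw [← hcw] at h1
      simp [hwt_eq_zero.mpr rfl] at h1
    refine ⟨Submodule.span_le.mpr (by simpa using hcC), finrank_span_singleton hc0, ?_⟩
    simpa using hc0
  | (i+2), _ =>
    obtain ⟨D', h1, h2, hEC, hfr, hmax⟩ := hD
    exact ⟨hEC, hfr, ne_bot_of_finrank hfr (by omega)⟩

lemma greedy_dmin_le (hC : C ≠ ⊥) {i : ℕ} {D D' : Submodule 𝔽 (Fin n → 𝔽)}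
    (hD : IsGreedy hwt C (i+1) D) (hD' : IsGreedy hwt C (i+1) D') :
    dminN hwt D' ≤ dminN hwt D := by
  match i with
  | 0 =>
    obtain ⟨c, hcC, hcw, rfl⟩ := hD
    obtain ⟨c', hcC', hcw', rfl⟩ := hD'
    have hc0 : c ≠ 0 := by
      intro h; rw [h] at hcw
      have h1 := one_le_sSup_hwt hC
      rw [← hcw] at h1; simp [hwt_eq_zero.mpr rfl] at h1
    have hc0' : c' ≠ 0 := by
      intro h; rw [h] at hcw'
      have h1 := one_le_sSup_hwt hC
      rw [← hcw'] at h1; simp [hwt_eq_zero.mpr rfl] at h1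
    rw [dminN_span_singleton hc0, dminN_span_singleton hc0', hcw, hcw']
  | (j+1) =>
    obtain ⟨D₀, h1, h2, hEC, hfr, hmax⟩ := hD
    obtain ⟨D₀', h1', h2', hEC', hfr', hmax'⟩ := hD'
    exact hmax D' D₀' h1' h2' hEC' hfr'

lemma greedy_tower :
    ∀ (j : ℕ) (D : Submodule 𝔽 (Fin n → 𝔽)), IsGreedy hwt C j D →
      ∀ s, 1 ≤ s → s ≤ j → ∃ F, IsGreedy hwt C s F ∧ F ≤ D
  | 0, D, h, s, hs1, hsj => absurd (hs1.trans hsj) (by simp)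
  | 1, D, h, s, hs1, hsj => by
      have hs : s = 1 := le_antisymm hsj hs1
      subst hs
      exact ⟨D, h, le_rfl⟩
  | (i+2), E, h, s, hs1, hsj => by
      rcases eq_or_lt_of_le hsj with rfl | hlt
      · exact ⟨E, h, le_rfl⟩
      · obtain ⟨D, hD, hDE, -⟩ := h
        obtain ⟨F, hF, hFD⟩ := greedy_tower (i+1) D hD s hs1 (by omega)
        exact ⟨F, hF, hFD.trans hDE⟩

lemma exists_greedy (hC : C ≠ ⊥) :
    ∀ j, 1 ≤ j → j ≤ finrank 𝔽 C → ∃ E, IsGreedy hwt C j E := by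
  intro j hj1
  induction j, hj1 using Nat.le_induction with
  | base =>
    intro _
    obtain ⟨c, hcC, hc0, hcw⟩ := exists_maxwt hC
    exact ⟨Submodule.span 𝔽 {c}, c, hcC, hcw, rfl⟩
  | succ j hj ih =>
    intro hjk
    obtain ⟨D, hD⟩ := ih (by omega)
    obtain ⟨hDC, hfrD, hDbot⟩ := greedy_basic hC hj hD
    -- find v ∈ C \ D
    have hex : ∃ v, v ∈ C ∧ v ∉ D := by
      by_contra hco
      push_neg at hco
      have : C ≤ D := fun v hv => hco v hv
      have := Submodule.finrank_mono this
      omega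
    obtain ⟨v, hvC, hvD⟩ := hex
    set S := {d : ℕ | ∃ D' E' : Submodule 𝔽 (Fin n → 𝔽), IsGreedy hwt C j D' ∧ D' ≤ E' ∧
      E' ≤ C ∧ finrank 𝔽 E' = j + 1 ∧ dminN hwt E' = d} with hS
    have hne : S.Nonempty := by
      refine ⟨dminN hwt (D ⊔ Submodule.span 𝔽 {v}), D, D ⊔ Submodule.span 𝔽 {v}, hD,
        le_sup_left, ?_, ?_, rfl⟩
      · exact sup_le hDC (Submodule.span_le.mpr (by simpa using hvC))
      · rw [finrank_sup_span hvD, hfrD]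
    have hbdd : BddAbove S := by
      refine ⟨n, ?_⟩
      rintro d ⟨D', E', -, -, -, -, rfl⟩
      exact dminN_le_n E'
    obtain ⟨D', E', hD', hle, hEC', hfr', hdm⟩ := Nat.sSup_mem hne hbdd
    obtain ⟨i, rfl⟩ : ∃ i, j = i + 1 := ⟨j - 1, by omega⟩
    refine ⟨E', D', hD', hle, hEC', hfr', ?_⟩
    intro E'' D'' h1 h2 h3 h4
    rw [hdm]
    exact le_csSup hbdd ⟨D'', E'', h1, h2, h3, h4, rfl⟩

lemma alphaG_eq (hC : C ≠ ⊥) {i : ℕ} {D : Submodule 𝔽 (Fin n → 𝔽)}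
    (hD : IsGreedy hwt C (i+1) D) :
    alphaG hwt C (i+1) = dminN hwt D := by
  have hub : ∀ d ∈ {d : ℕ | ∃ D' : Submodule 𝔽 (Fin n → 𝔽),
      IsGreedy hwt C (i+1) D' ∧ dminN hwt D' = d}, d ≤ dminN hwt D := by
    rintro d ⟨D', hD', rfl⟩
    exact greedy_dmin_le hC hD hD'
  have hmem : dminN hwt D ∈ {d : ℕ | ∃ D' : Submodule 𝔽 (Fin n → 𝔽),
      IsGreedy hwt C (i+1) D' ∧ dminN hwt D' = d} := ⟨D, hD, rfl⟩
  exact le_antisymm (csSup_le ⟨_, hmem⟩ hub) (le_csSup ⟨_, hub⟩ hmem)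

lemma lemB (hC : C ≠ ⊥) {j : ℕ} (hj : 1 ≤ j) {E : Submodule 𝔽 (Fin n → 𝔽)}
    (hE : IsGreedy hwt C (j+1) E) :
    ∃ D x, IsGreedy hwt C j D ∧ D ≤ E ∧ x ∈ E ∧ x ∉ D ∧ hwt x = dminN hwt E := by
  obtain ⟨i, rfl⟩ : ∃ i, j = i + 1 := ⟨j - 1, by omega⟩
  obtain ⟨D₀, hD₀, hD₀E, hEC, hfrE, hmaxE⟩ := hE
  have hEbot : E ≠ ⊥ := ne_bot_of_finrank hfrE (by omega)
  obtain ⟨x₀, hx₀E, hx₀0, hx₀w⟩ := dminN_exists hEbot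
  have key : ∀ s, 1 ≤ s → s ≤ i + 1 →
      ∃ F x, IsGreedy hwt C s F ∧ F ≤ E ∧ x ∈ E ∧ x ∉ F ∧ hwt x = dminN hwt E := by
    intro s hs1
    induction s, hs1 using Nat.le_induction with
    | base =>
      intro _
      obtain ⟨F₁, hF₁, hF₁D₀⟩ := greedy_tower (i+1) D₀ hD₀ 1 le_rfl (by omega)
      obtain ⟨c, hcC, hcw, rfl⟩ := hF₁
      by_cases hall : ∀ v, v ∈ E → v ≠ 0 → hwt v = dminN hwt E → v ∈ Submodule.span 𝔽 {c}
      · exfalso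
        -- then dminN E equals max weight and E ≤ span {c}, contradicting finrank
        have hx₀c := hall x₀ hx₀E hx₀0 hx₀w
        obtain ⟨a, ha⟩ := Submodule.mem_span_singleton.mp hx₀c
        have ha0 : a ≠ 0 := by rintro rfl; simp at ha; exact hx₀0 ha.symm
        have hc0 : c ≠ 0 := by rintro rfl; simp at ha; exact hx₀0 ha.symm
        have hwx₀ : hwt x₀ = hwt c := by rw [← ha, hwt_smul ha0]
        have hdE : dminN hwt E = sSup (hwt '' (C : Set (Fin n → 𝔽))) := by
          rw [← hx₀w, hwx₀, hcw]
        have hEle : E ≤ Submodule.span 𝔽 {c} := by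
          intro v hvE
          rcases eq_or_ne v 0 with rfl | hv0
          · exact Submodule.zero_mem _
          · refine hall v hvE hv0 (le_antisymm ?_ ?_)
            · rw [hdE]; exact hwt_le_sSup (hEC hvE)
            · exact dminN_le hvE hv0
        have h1 := Submodule.finrank_mono hEle
        rw [hfrE, finrank_span_singleton hc0] at h1
        omega
      · push_neg at hall
        obtain ⟨x, hxE, hx0, hxw, hxc⟩ := hall
        exact ⟨_, x, ⟨c, hcC, hcw, rfl⟩, le_trans hF₁D₀ hD₀E, hxE, hxc, hxw⟩
    | succ s hs ih =>
      intro hsle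
      obtain ⟨F, x, hF, hFE, hxE, hxF, hxw⟩ := ih (by omega)
      obtain ⟨Fs1, hFs1, hFs1D₀⟩ := greedy_tower (i+1) D₀ hD₀ (s+1) (by omega) hsle
      obtain ⟨-, hfrFs1, hFs1bot⟩ := greedy_basic hC (by omega) hFs1
      have hFs1E : Fs1 ≤ E := le_trans hFs1D₀ hD₀E
      rcases lt_or_ge (dminN hwt E) (dminN hwt Fs1) with hgt | hle2
      · refine ⟨Fs1, x₀, hFs1, hFs1E, hx₀E, ?_, hx₀w⟩
        intro hx₀F
        have := dminN_le hx₀F hx₀0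
        omega
      · have heq : dminN hwt Fs1 = dminN hwt E :=
          le_antisymm hle2 (dminN_anti hFs1bot hFs1E)
        obtain ⟨-, hfrF, hFbot⟩ := greedy_basic hC hs hF
        have hx0 : x ≠ 0 := by
          intro h
          rw [h, hwt_eq_zero.mpr rfl] at hxw
          have := dminN_pos hEbot
          omega
        set P := F ⊔ Submodule.span 𝔽 {x} with hP
        have hfrP : finrank 𝔽 P = s + 1 := by rw [hP, finrank_sup_span hxF, hfrF]
        have hPE : P ≤ E := sup_le hFE (Submodule.span_le.mpr (by simpa using hxE))
        have hz : ∃ z, z ∈ E ∧ z ∉ P := by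
          by_contra hco
          push_neg at hco
          have hle3 : E ≤ P := fun v hv => hco v hv
          have := Submodule.finrank_mono hle3
          omega
        obtain ⟨z, hzE, hzP⟩ := hz
        have hzF : z ∉ F := fun h => hzP (le_sup_left (a := F) h)
        set F' := F ⊔ Submodule.span 𝔽 {z} with hF'
        have hfrF' : finrank 𝔽 F' = s + 1 := by rw [hF', finrank_sup_span hzF, hfrF]
        have hF'E : F' ≤ E := sup_le hFE (Submodule.span_le.mpr (by simpa using hzE))
        have hF'C : F' ≤ C := le_trans hF'E hEC
        have hxF' : x ∉ F' := by
          intro hx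
          rw [hF', Submodule.mem_sup] at hx
          obtain ⟨f, hf, w, hw, hfw⟩ := hx
          obtain ⟨a, rfl⟩ := Submodule.mem_span_singleton.mp hw
          rcases eq_or_ne a 0 with rfl | ha
          · rw [zero_smul, add_zero] at hfw
            exact hxF (hfw ▸ hf)
          · apply hzP
            have h1 : a • z = x - f := by rw [← hfw]; abel
            have h2 : x - f ∈ P := by
              refine Submodule.sub_mem _ ?_ ?_
              · exact Submodule.mem_sup_right (Submodule.mem_span_singleton_self x)
              · exact Submodule.mem_sup_left hf
            have h3 : (a⁻¹ * a) • z ∈ P := by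
              rw [mul_smul, h1]
              exact Submodule.smul_mem _ _ h2
            rwa [inv_mul_cancel₀ ha, one_smul] at h3
        have hF'bot : F' ≠ ⊥ := ne_bot_of_finrank hfrF' (by omega)
        -- F'' is greedy at level s+1
        obtain ⟨s', rfl⟩ : ∃ s', s = s' + 1 := ⟨s - 1, by omega⟩
        obtain ⟨G₀, hG₀, hG₀F, hFs1C, hfrFs1', hmaxFs1⟩ := hFs1
        have hdF' : dminN hwt F' = dminN hwt E := by
          refine le_antisymm ?_ (dminN_anti hF'bot hF'E)
          rw [← heq]
          exact hmaxFs1 F' F hF le_sup_left hF'C hfrF'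
        refine ⟨F', x, ?_, hF'E, hxE, hxF', ?_⟩
        · refine ⟨F, hF, le_sup_left, hF'C, hfrF', ?_⟩
          intro E' D' h1 h2 h3 h4
          rw [hdF', ← heq]
          exact hmaxFs1 E' D' h1 h2 h3 h4
        · exact hxw
  obtain ⟨F, x, hF, hFE, hxE, hxF, hxw⟩ := key (i+1) (by omega) le_rfl
  exact ⟨F, x, hF, hFE, hxE, hxF, hxw⟩

lemma lemQ (hC : C ≠ ⊥) :
    ∀ j, 1 ≤ j → ∀ E : Submodule 𝔽 (Fin n → 𝔽), IsGreedy hwt C j E →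
    ∃ g : ℕ → (Fin n → 𝔽),
      Submodule.span 𝔽 (g '' {t | t < j}) = E ∧
      ∀ i < j, IsGreedy hwt C (i+1) (Submodule.span 𝔽 (g '' {t | t < i+1})) ∧
        g i ∉ Submodule.span 𝔽 (g '' {t | t < i}) ∧
        hwt (g i) = dminN hwt (Submodule.span 𝔽 (g '' {t | t < i+1})) := by
  intro j hj1
  induction j, hj1 using Nat.le_induction with
  | base =>
    intro E hE
    obtain ⟨c, hcC, hcw, rfl⟩ := hE
    have hc0 : c ≠ 0 := by
      intro h
      rw [h] at hcw
      have h1 := one_le_sSup_hwt hC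
      rw [← hcw] at h1
      simp [hwt_eq_zero.mpr rfl] at h1
    refine ⟨fun _ => c, ?_, ?_⟩
    · congr 1
      ext v
      simp only [Set.mem_image, Set.mem_setOf_eq, Set.mem_singleton_iff]
      constructor
      · rintro ⟨t, -, rfl⟩; rfl
      · rintro rfl; exact ⟨0, by omega, rfl⟩
    · intro i hi
      obtain rfl : i = 0 := by omega
      have h01 : ((fun _ => c) : ℕ → Fin n → 𝔽) '' {t | t < 0 + 1} = {c} := by
        ext v
        simp only [Set.mem_image, Set.mem_setOf_eq, Set.mem_singleton_iff]
        constructor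
        · rintro ⟨t, -, rfl⟩; rfl
        · rintro rfl; exact ⟨0, by omega, rfl⟩
      have h00 : ((fun _ => c) : ℕ → Fin n → 𝔽) '' {t | t < 0} = ∅ := by
        have : {t : ℕ | t < 0} = ∅ := by ext t; simp
        rw [this, Set.image_empty]
      rw [h01, h00, Submodule.span_empty]
      refine ⟨⟨c, hcC, hcw, rfl⟩, by simpa using hc0, (dminN_span_singleton hc0).symm⟩
  | succ j hj ih =>
    intro E hE
    obtain ⟨D, x, hD, hDE, hxE, hxD, hxw⟩ := lemB hC hj hE
    obtain ⟨g, hgspan, hgfacts⟩ := ih D hD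
    obtain ⟨-, hfrD, -⟩ := greedy_basic hC hj hD
    obtain ⟨-, hfrE, -⟩ := greedy_basic hC (by omega) hE
    set g' : ℕ → (Fin n → 𝔽) := fun t => if t < j then g t else x with hg'
    have himg_lt : ∀ i ≤ j, g' '' {t | t < i} = g '' {t | t < i} := by
      intro i hij
      exact Set.image_congr fun t ht => if_pos (lt_of_lt_of_le ht hij)
    have hsplit : {t : ℕ | t < j + 1} = {t | t < j} ∪ {j} := by
      ext t
      simp only [Set.mem_setOf_eq, Set.mem_union, Set.mem_singleton_iff]
      omega
    have hg'j : g' j = x := if_neg (lt_irrefl j)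
    have himg_top : g' '' {t | t < j + 1} = g '' {t | t < j} ∪ {x} := by
      rw [hsplit, Set.image_union, himg_lt j le_rfl, Set.image_singleton, hg'j]
    have hspan_top : Submodule.span 𝔽 (g' '' {t | t < j + 1}) = E := by
      rw [himg_top, Submodule.span_union, hgspan]
      apply Submodule.eq_of_le_of_finrank_eq
      · exact sup_le hDE (Submodule.span_le.mpr (by simpa using hxE))
      · rw [finrank_sup_span hxD, hfrD, hfrE]
    refine ⟨g', hspan_top, ?_⟩
    intro i hi
    rcases lt_or_eq_of_le (by omega : i ≤ j) with hij | rfl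
    · have e1 : g' '' {t | t < i + 1} = g '' {t | t < i + 1} := himg_lt (i+1) (by omega)
      have e0 : g' '' {t | t < i} = g '' {t | t < i} := himg_lt i (by omega)
      have e2 : g' i = g i := if_pos hij
      rw [e1, e0, e2]
      exact hgfacts i hij
    · have e0 : g' '' {t | t < i} = g '' {t | t < i} := himg_lt i le_rfl
      rw [hg'j, e0, hspan_top, hgspan]
      exact ⟨hE, hxD, hxw⟩

end GreedyAux

/-- For a `k`-dimensional linear block code `C ⊆ 𝔽_q^n` (Hamming metric) there is a
generator matrix with rows `g₀, …, g_{k-1}` such that `D_i = ⟨g₀,…,g_{i-1}⟩` is a chain of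
greedy subcodes and, for each `i`, the greedy subcode distance `α_i^g(C)` equals both the
`i`-th partial distance `min{wt(v) : v ∈ g_{i-1} + ⟨g₀,…,g_{i-2}⟩}` of the matrix and the
Hamming weight of `g_{i-1}`. -/
theorem exists_generator_matrix_partial_distances_eq_greedy
    {𝔽 : Type*} [Field 𝔽] [Fintype 𝔽] {n k : ℕ}
    (C : Submodule 𝔽 (Fin n → 𝔽)) (hC : C ≠ ⊥) (hk : finrank 𝔽 C = k) (hk1 : 1 ≤ k) :
    ∃ g : Fin k → (Fin n → 𝔽),
      Submodule.span 𝔽 (Set.range g) = C ∧ LinearIndependent 𝔽 g ∧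
      ∀ (i : ℕ) (hi : i < k),
        IsGreedy hwt C (i + 1) (Submodule.span 𝔽 (g '' {j : Fin k | (j : ℕ) ≤ i})) ∧
        alphaG hwt C (i + 1) = dminN hwt (Submodule.span 𝔽 (g '' {j : Fin k | (j : ℕ) ≤ i})) ∧
        alphaG hwt C (i + 1) = hwt (g ⟨i, hi⟩) ∧
        alphaG hwt C (i + 1) =
          sInf {w : ℕ | ∃ v : Fin n → 𝔽,
            v - g ⟨i, hi⟩ ∈ Submodule.span 𝔽 (g '' {j : Fin k | (j : ℕ) < i}) ∧
            hwt v = w} := by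
  subst hk
  obtain ⟨E, hE⟩ := exists_greedy hC _ hk1 le_rfl
  obtain ⟨hEC, hfrE, -⟩ := greedy_basic hC hk1 hE
  have hEeq : E = C := Submodule.eq_of_le_of_finrank_eq hEC (by rw [hfrE])
  rw [hEeq] at hE
  obtain ⟨g, hgspan, hgfacts⟩ := lemQ hC _ hk1 C hE
  set k := finrank 𝔽 C with hkdef
  set G : Fin k → (Fin n → 𝔽) := fun t => g ↑t with hG
  have hrange : Set.range G = g '' {t : ℕ | t < k} := by
    ext v
    constructor
    · rintro ⟨j, rfl⟩; exact ⟨↑j, j.isLt, rfl⟩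
    · rintro ⟨t, ht, rfl⟩; exact ⟨⟨t, ht⟩, rfl⟩
  have hspanG : Submodule.span 𝔽 (Set.range G) = C := by rw [hrange, hgspan]
  refine ⟨G, hspanG, ?_, ?_⟩
  · rw [linearIndependent_iff_card_eq_finrank_span, Set.finrank, hspanG]
    simp
    exact hkdef
  · intro i hi
    have himgle : G '' {j : Fin k | (j : ℕ) ≤ i} = g '' {t : ℕ | t < i + 1} := by
      ext v
      constructor
      · rintro ⟨j, hj, rfl⟩
        exact ⟨↑j, by simpa using Nat.lt_succ_of_le hj, rfl⟩
      · rintro ⟨t, ht, rfl⟩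
        simp only [Set.mem_setOf_eq] at ht
        exact ⟨⟨t, by omega⟩, by simpa using Nat.lt_succ_iff.mp ht, rfl⟩
    have himglt : G '' {j : Fin k | (j : ℕ) < i} = g '' {t : ℕ | t < i} := by
      ext v
      constructor
      · rintro ⟨j, hj, rfl⟩
        exact ⟨↑j, hj, rfl⟩
      · rintro ⟨t, ht, rfl⟩
        simp only [Set.mem_setOf_eq] at ht
        exact ⟨⟨t, by omega⟩, ht, rfl⟩
    obtain ⟨hgreedy, hnotmem, hwteq⟩ := hgfacts i hi
    have halpha : alphaG hwt C (i+1) = dminN hwt (Submodule.span 𝔽 (g '' {t | t < i + 1})) :=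
      alphaG_eq hC hgreedy
    have hGi : G ⟨i, hi⟩ = g i := rfl
    refine ⟨by rw [himgle]; exact hgreedy, by rw [himgle]; exact halpha,
      by rw [hGi, halpha, hwteq], ?_⟩
    rw [himglt, hGi, halpha]
    set P := Submodule.span 𝔽 (g '' {t : ℕ | t < i}) with hPdef
    set Q := Submodule.span 𝔽 (g '' {t : ℕ | t < i + 1}) with hQdef
    have hPQ : P ≤ Q := Submodule.span_mono (Set.image_mono (f := g) (fun t ht => by
      simp only [Set.mem_setOf_eq] at *; omega))
    have hgiQ : g i ∈ Q := Submodule.subset_span ⟨i, by simp, rfl⟩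
    have hmem : hwt (g i) ∈ {w : ℕ | ∃ v : Fin n → 𝔽, v - g i ∈ P ∧ hwt v = w} :=
      ⟨g i, by simpa using P.zero_mem, rfl⟩
    have hlb : ∀ w ∈ {w : ℕ | ∃ v : Fin n → 𝔽, v - g i ∈ P ∧ hwt v = w},
        dminN hwt Q ≤ w := by
      rintro w ⟨v, hv, rfl⟩
      have hvQ : v ∈ Q := by
        have : v = (v - g i) + g i := by abel
        rw [this]
        exact Q.add_mem (hPQ hv) hgiQ
      have hv0 : v ≠ 0 := by
        rintro rfl
        apply hnotmem
        have : -(g i) ∈ P := by simpa using hv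
        simpa using P.neg_mem this
      exact dminN_le hvQ hv0
    exact le_antisymm (le_csInf ⟨_, hmem⟩ hlb) (hwteq ▸ Nat.sInf_le hmem)
end
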